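/- If a Hamiltonian cycle of the threeleaper exists on {0,1}^11 (consecutive vertices at Hamming distance 9), then for every k ≥ 11 a Hamiltonian cycle of the threeleaper exists on {0,1}^k. -/

import Mathlib

open Finset

private lemma hamming_sum {n : ℕ} (x y : Fin n → Bool) :
    hammingDist x y = ∑ i, if x i ≠ y i then 1 else 0 := by
  classical
  rw [show hammingDist x y = (Finset.univ.filter fun i => x i ≠ y i).card from rfl,
    Finset.card_filter]

private lemma hamming_cons {n : ℕ} (a b : Bool) (x y : Fin n → Bool) :
    hammingDist (Fin.cons a x : Fin (n+1) → Bool) (Fin.cons b y : Fin (n+1) → Bool)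
      = (if a ≠ b then 1 else 0) + hammingDist x y := by
  rw [hamming_sum, hamming_sum, Fin.sum_univ_succ]
  simp

private lemma step' {k N : ℕ} (hk : 8 ≤ k) (hN : N = 2^k)
    (g : ZMod N → (Fin k → Bool)) (hb : Function.Bijective g)
    (hd : ∀ i, hammingDist (g i) (g (i+1)) = 9) :
    ∃ g' : ZMod (2*N) → (Fin (k+1) → Bool), Function.Bijective g' ∧
      ∀ i, hammingDist (g' i) (g' (i+1)) = 9 := by
  classical
  have hNpos : 0 < N := hN ▸ Nat.two_pow_pos k
  haveI : NeZero N := ⟨by omega⟩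
  haveI : NeZero (2*N) := ⟨by omega⟩
  set S : Finset (Fin k) := (univ : Finset (Fin 8)).map (Fin.castLEEmb hk) with hS
  have hScard : S.card = 8 := by simp [hS]
  set σ : (Fin k → Bool) → (Fin k → Bool) :=
    fun v i => if i ∈ S then !(v i) else v i with hσ
  have σσ : ∀ v, σ (σ v) = v := by
    intro v; funext i; by_cases h : i ∈ S <;> simp [hσ, h]
  have σinj : Function.Injective σ := by
    intro v w hvw
    have := congrArg σ hvw
    rwa [σσ, σσ] at this
  have dist_σσ : ∀ v w, hammingDist (σ v) (σ w) = hammingDist v w := by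
    intro v w
    show (Finset.univ.filter fun i => σ v i ≠ σ w i).card
        = (Finset.univ.filter fun i => v i ≠ w i).card
    congr 1
    apply Finset.filter_congr
    intro i _
    by_cases h : i ∈ S <;> simp [hσ, h]
  have dist_σ : ∀ v, hammingDist v (σ v) = 8 := by
    intro v
    show (Finset.univ.filter fun i => v i ≠ σ v i).card = 8
    rw [show (Finset.univ.filter fun i => v i ≠ σ v i) = S from ?_, hScard]
    ext i
    by_cases h : i ∈ S <;> simp [hσ, h]
  set g' : ZMod (2*N) → (Fin (k+1) → Bool) := fun i =>
    if i.val < N then Fin.cons false (g (i.val : ZMod N))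
    else Fin.cons true (σ (g ((2*N - 1 - i.val : ℕ) : ZMod N))) with hg'
  refine ⟨g', ?_, ?_⟩
  · rw [Fintype.bijective_iff_injective_and_card]
    constructor
    · intro a b hab
      have ha := ZMod.val_lt a
      have hbv := ZMod.val_lt b
      have hval : a.val = b.val := by
        by_cases h1 : a.val < N <;> by_cases h2 : b.val < N
        · simp only [hg', if_pos h1, if_pos h2] at hab
          have htail := congrArg Fin.tail hab
          rw [Fin.tail_cons, Fin.tail_cons] at htail
          have heq := hb.1 htail
          have e1 : ((a.val : ZMod N)).val = a.val := ZMod.val_cast_of_lt h1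
          have e2 : ((b.val : ZMod N)).val = b.val := ZMod.val_cast_of_lt h2
          rw [← e1, ← e2, heq]
        · have := congrFun hab 0
          simp only [hg', if_pos h1, if_neg h2, Fin.cons_zero] at this
          exact absurd this (by simp)
        · have := congrFun hab 0
          simp only [hg', if_neg h1, if_pos h2, Fin.cons_zero] at this
          exact absurd this (by simp)
        · simp only [hg', if_neg h1, if_neg h2] at hab
          have htail := congrArg Fin.tail hab
          rw [Fin.tail_cons, Fin.tail_cons] at htail
          have heq := hb.1 (σinj htail)
          have l1 : 2*N - 1 - a.val < N := by omega
          have l2 : 2*N - 1 - b.val < N := by omega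
          have e1 := ZMod.val_cast_of_lt (n := N) l1
          have e2 := ZMod.val_cast_of_lt (n := N) l2
          have : 2*N - 1 - a.val = 2*N - 1 - b.val := by
            rw [← e1, ← e2, heq]
          omega
      exact ZMod.val_injective _ hval
    · simp only [ZMod.card, Fintype.card_fun, Fintype.card_fin, Fintype.card_bool]
      rw [hN]; ring
  · intro i
    set n := i.val with hn
    have hnM : n < 2*N := ZMod.val_lt i
    have h1M : (1 : ZMod (2*N)).val = 1 := by
      haveI : Fact (1 < 2*N) := ⟨by omega⟩
      exact ZMod.val_one (2*N)
    have hval : (i + 1).val = (n + 1) % (2*N) := by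
      rw [ZMod.val_add, h1M, hn]
    by_cases h1 : n + 1 < N
    · have hn' : n < N := by omega
      have h2 : (i + 1).val = n + 1 := by rw [hval, Nat.mod_eq_of_lt (by omega)]
      have e1 : g' i = Fin.cons false (g (n : ZMod N)) := by
        rw [hg']; simp only [← hn, if_pos hn']
      have e2 : g' (i + 1) = Fin.cons false (g ((n + 1 : ℕ) : ZMod N)) := by
        rw [hg']; simp only [h2, if_pos h1]
      rw [e1, e2, hamming_cons]
      have hc : ((n + 1 : ℕ) : ZMod N) = (n : ZMod N) + 1 := by push_cast; ring
      rw [hc]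
      simpa using hd (n : ZMod N)
    · by_cases h2 : n < N
      · have hnext : (i + 1).val = N := by
          rw [hval, Nat.mod_eq_of_lt (by omega)]; omega
        have e1 : g' i = Fin.cons false (g (n : ZMod N)) := by
          rw [hg']; simp only [← hn, if_pos h2]
        have e2 : g' (i + 1) = Fin.cons true (σ (g ((2*N - 1 - N : ℕ) : ZMod N))) := by
          rw [hg']; simp only [hnext, if_neg (lt_irrefl N)]
        have harg : 2*N - 1 - N = n := by omega
        rw [e1, e2, harg, hamming_cons, dist_σ]
        norm_num
      · by_cases h3 : n + 1 < 2*N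
        · have hnext : (i + 1).val = n + 1 := by
            rw [hval, Nat.mod_eq_of_lt (by omega)]
          have e1 : g' i = Fin.cons true (σ (g ((2*N - 1 - n : ℕ) : ZMod N))) := by
            rw [hg']; simp only [← hn, if_neg h2]
          have e2 : g' (i + 1)
              = Fin.cons true (σ (g ((2*N - 1 - (n + 1) : ℕ) : ZMod N))) := by
            rw [hg']; simp only [hnext, if_neg (by omega : ¬ n + 1 < N)]
          rw [e1, e2, hamming_cons, dist_σσ]
          have hcast : ((2*N - 1 - n : ℕ) : ZMod N)
              = ((2*N - 1 - (n + 1) : ℕ) : ZMod N) + 1 := by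
            rw [show 2*N - 1 - n = (2*N - 1 - (n + 1)) + 1 by omega]; push_cast; ring
          rw [hcast, hammingDist_comm]
          simpa using hd ((2*N - 1 - (n + 1) : ℕ) : ZMod N)
        · have hnext : (i + 1).val = 0 := by
            rw [hval, show n + 1 = 2*N by omega, Nat.mod_self]
          have e1 : g' i = Fin.cons true (σ (g ((2*N - 1 - n : ℕ) : ZMod N))) := by
            rw [hg']; simp only [← hn, if_neg h2]
          have e2 : g' (i + 1) = Fin.cons false (g ((0 : ℕ) : ZMod N)) := by
            rw [hg']; simp only [hnext, if_pos hNpos]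
          have harg : 2*N - 1 - n = 0 := by omega
          rw [e1, e2, harg, hamming_cons, hammingDist_comm, dist_σ]
          norm_num

private lemma step {k : ℕ} (hk : 8 ≤ k)
    (g : ZMod (2^k) → (Fin k → Bool)) (hb : Function.Bijective g)
    (hd : ∀ i, hammingDist (g i) (g (i+1)) = 9) :
    ∃ g' : ZMod (2^(k+1)) → (Fin (k+1) → Bool), Function.Bijective g' ∧
      ∀ i, hammingDist (g' i) (g' (i+1)) = 9 := by
  rw [show (2:ℕ)^(k+1) = 2 * 2^k by ring]
  exact step' hk rfl g hb hd

theorem stmt_12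
    (h : ∃ f : ZMod (2 ^ 11) → (Fin 11 → Bool), Function.Bijective f ∧
      ∀ i, hammingDist (f i) (f (i + 1)) = 9) :
    ∀ k : ℕ, 11 ≤ k → ∃ g : ZMod (2 ^ k) → (Fin k → Bool), Function.Bijective g ∧
      ∀ i, hammingDist (g i) (g (i + 1)) = 9 := by
  intro k hk
  induction k, hk using Nat.le_induction with
  | base => exact h
  | succ n hn ih =>
    obtain ⟨g, hb, hd⟩ := ih
    exact step (by omega) g hb hd
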